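/- Let P be a probability measure on a measurable space 𝒳, let (Λᵢ)_{i∈ℕ} be a sequence of p-tests for P in probability form (i.e., P({x : Λᵢ(x) ≤ ε}) ≤ ε for every ε > 0 and every i), and let (wᵢ)_{i∈ℕ} be positive reals with ∑ᵢ wᵢ ≤ 1. Then the function x ↦ infᵢ Λᵢ(x)/wᵢ is again a p-test for P in probability form, i.e., for every ε > 0, P({x : infᵢ Λᵢ(x)/wᵢ ≤ ε}) ≤ ε. -/

import Mathlib

open MeasureTheory ENNReal

/-- A weighted combination `inf_i Λᵢ/wᵢ` of p-tests in probability form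
(with positive weights summing to at most 1) is again a p-test in probability form. -/
theorem combination_p_tests_probability_form
    {X : Type*} [MeasurableSpace X] (P : Measure X) [IsProbabilityMeasure P]
    (Λ : ℕ → X → ℝ≥0∞) (hmeas : ∀ i, Measurable (Λ i))
    (hptest : ∀ i, ∀ ε : ℝ≥0∞, 0 < ε → P {x | Λ i x ≤ ε} ≤ ε)
    (w : ℕ → ℝ≥0∞) (hw : ∀ i, 0 < w i) (hwsum : ∑' i, w i ≤ 1) :
    ∀ ε : ℝ≥0∞, 0 < ε → P {x | (⨅ i, Λ i x / w i) ≤ ε} ≤ ε := by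
  intro ε hε
  -- each weight is finite
  have hwfin : ∀ i, w i ≠ ∞ := by
    intro i
    have : w i ≤ 1 := le_trans (ENNReal.le_tsum i) hwsum
    exact ne_top_of_le_ne_top one_ne_top this
  by_cases hεtop : 1 ≤ ε
  · calc P {x | (⨅ i, Λ i x / w i) ≤ ε} ≤ P Set.univ := measure_mono (Set.subset_univ _)
      _ = 1 := measure_univ
      _ ≤ ε := hεtop
  push_neg at hεtop
  have hεfin : ε ≠ ∞ := ne_top_of_le_ne_top one_ne_top hεtop.le
  -- show bound ε + δ for all δ > 0
  refine ENNReal.le_of_forall_pos_le_add ?_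
  intro δ hδ _
  have hδ' : (0:ℝ≥0∞) < δ := by exact_mod_cast hδ
  set ε' : ℝ≥0∞ := ε + δ with hε'
  have hεlt : ε < ε' := ENNReal.lt_add_right hεfin (by exact_mod_cast hδ.ne')
  have hsub : {x | (⨅ i, Λ i x / w i) ≤ ε} ⊆ ⋃ i, {x | Λ i x ≤ ε' * w i} := by
    intro x hx
    have : (⨅ i, Λ i x / w i) < ε' := lt_of_le_of_lt hx hεlt
    obtain ⟨i, hi⟩ := exists_lt_of_ciInf_lt this
    refine Set.mem_iUnion.2 ⟨i, ?_⟩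
    have := (ENNReal.div_lt_iff (Or.inl (hw i).ne') (Or.inl (hwfin i))).mp hi
    exact le_of_lt this
  calc P {x | (⨅ i, Λ i x / w i) ≤ ε}
      ≤ P (⋃ i, {x | Λ i x ≤ ε' * w i}) := measure_mono hsub
    _ ≤ ∑' i, P {x | Λ i x ≤ ε' * w i} := measure_iUnion_le _
    _ ≤ ∑' i, ε' * w i := by
        refine ENNReal.tsum_le_tsum fun i => ?_
        exact hptest i _ (ENNReal.mul_pos (lt_of_le_of_lt zero_le hεlt).ne' (hw i).ne')
    _ = ε' * ∑' i, w i := ENNReal.tsum_mul_left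
    _ ≤ ε' * 1 := mul_le_mul_right hwsum _
    _ = ε + δ := by rw [mul_one]
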